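/- For n ≥ 5, in the braid group B_n with standard generators σ_1, …, σ_{n-1} (satisfying σ_i σ_{i+1} σ_i = σ_{i+1} σ_i σ_{i+1} and σ_i σ_j = σ_j σ_i for |i−j| ≥ 2), the commutator subgroup [B_n, B_n] is generated by the finite set S = {σ_i σ_{i+1}^{-1} : 1 ≤ i ≤ n−2}. -/

import Mathlib

/-- The braid relations on generators indexed by `Fin (n-1)` (0-indexed: generator `i`
corresponds to the standard generator `σ_{i+1}`). -/
def braidRels (n : ℕ) : Set (FreeGroup (Fin (n - 1))) :=
  {r | (∃ i j : Fin (n - 1), (i : ℕ) + 1 = (j : ℕ) ∧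
          r = FreeGroup.of i * FreeGroup.of j * FreeGroup.of i *
              (FreeGroup.of j * FreeGroup.of i * FreeGroup.of j)⁻¹) ∨
       (∃ i j : Fin (n - 1), (i : ℕ) + 2 ≤ (j : ℕ) ∧
          r = FreeGroup.of i * FreeGroup.of j * (FreeGroup.of j * FreeGroup.of i)⁻¹)}

/-- The braid group `B_n`, presented by the standard generators and braid relations. -/
def BraidGroup (n : ℕ) : Type := PresentedGroup (braidRels n)

instance (n : ℕ) : Group (BraidGroup n) := by unfold BraidGroup; infer_instance

/-- The standard generator `σ_{i+1}` of `B_n` (0-indexed). -/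
def braidGen (n : ℕ) (i : Fin (n - 1)) : BraidGroup n := PresentedGroup.of i

namespace BraidAux

variable {G : Type*} [Group G]

/- abstract consequences of the braid relation -/
lemma P1 {a b : G} (h : a*b*a = b*a*b) : a*b*a⁻¹ = b⁻¹*a*b := by
  calc a*b*a⁻¹ = b⁻¹*(b*a*b)*a⁻¹ := by group
    _ = b⁻¹*(a*b*a)*a⁻¹ := by rw [h]
    _ = b⁻¹*a*b := by group

lemma P2 {a b : G} (h : a*b*a = b*a*b) : a⁻¹*b*a = b*a*b⁻¹ := by
  calc a⁻¹*b*a = a⁻¹*(b*a*b)*b⁻¹ := by group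
    _ = a⁻¹*(a*b*a)*b⁻¹ := by rw [h]
    _ = b*a*b⁻¹ := by group

lemma P3 {a b : G} (h : a*b*a = b*a*b) : a*b⁻¹*a⁻¹ = b⁻¹*a⁻¹*b := by
  have := P1 h
  calc a*b⁻¹*a⁻¹ = (a*b*a⁻¹)⁻¹ := by group
    _ = (b⁻¹*a*b)⁻¹ := by rw [this]
    _ = b⁻¹*a⁻¹*b := by group

lemma A1 {a b : G} (h : a*b*a = b*a*b) : a * (a*b⁻¹) * a⁻¹ = (a*b⁻¹) * (a⁻¹*b) := by
  calc a * (a*b⁻¹) * a⁻¹ = a*(a*b⁻¹*a⁻¹) := by group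
    _ = a*(b⁻¹*a⁻¹*b) := by rw [P3 h]
    _ = (a*b⁻¹) * (a⁻¹*b) := by group

lemma A2 {a b : G} (h : a*b*a = b*a*b) : b * (a*b⁻¹) * b⁻¹ = (a⁻¹*b) * (a*b⁻¹) := by
  have h' : b*a*b⁻¹ = a⁻¹*b*a := P1 h.symm
  calc b * (a*b⁻¹) * b⁻¹ = (b*a*b⁻¹)*b⁻¹ := by group
    _ = (a⁻¹*b*a)*b⁻¹ := by rw [h']
    _ = (a⁻¹*b) * (a*b⁻¹) := by group

lemma A3 {a b : G} : a⁻¹ * (a*b⁻¹) * a = b⁻¹*a := by group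

lemma A4 {a b : G} : b⁻¹ * (a*b⁻¹) * b = b⁻¹*a := by group

lemma A5 {a b c : G} (hbc : b*c*b = c*b*c) (hac : a*c = c*a) :
    c * (a*b⁻¹) * c⁻¹ = (a*b⁻¹) * (c⁻¹*b) := by
  have h3 : c*b⁻¹*c⁻¹ = b⁻¹*c⁻¹*b := P3 hbc.symm
  calc c * (a*b⁻¹) * c⁻¹ = (c*a)*(b⁻¹*c⁻¹) := by group
    _ = (a*c)*(b⁻¹*c⁻¹) := by rw [hac]
    _ = a*(c*b⁻¹*c⁻¹) := by group
    _ = a*(b⁻¹*c⁻¹*b) := by rw [h3]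
    _ = (a*b⁻¹) * (c⁻¹*b) := by group

lemma A6 {a b c : G} (hac : a*c = c*a) :
    c⁻¹ * (a*b⁻¹) * c = (a*c⁻¹) * (b⁻¹*c) := by
  have h' : c⁻¹*a = a*c⁻¹ := by
    calc c⁻¹*a = c⁻¹*(a*c)*c⁻¹ := by group
      _ = c⁻¹*(c*a)*c⁻¹ := by rw [hac]
      _ = a*c⁻¹ := by group
  calc c⁻¹ * (a*b⁻¹) * c = (c⁻¹*a)*(b⁻¹*c) := by group
    _ = (a*c⁻¹)*(b⁻¹*c) := by rw [h']

lemma A7 {a b d : G} (hda : d*a*d = a*d*a) (hdb : d*b = b*d) :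
    d * (a*b⁻¹) * d⁻¹ = (a⁻¹*d) * (a*b⁻¹) := by
  have h1 : d*a*d⁻¹ = a⁻¹*d*a := P1 hda
  have h2 : b⁻¹*d⁻¹ = d⁻¹*b⁻¹ := by
    have := congrArg (·⁻¹) hdb
    simpa [mul_inv_rev] using this
  calc d * (a*b⁻¹) * d⁻¹ = (d*a)*(b⁻¹*d⁻¹) := by group
    _ = (d*a)*(d⁻¹*b⁻¹) := by rw [h2]
    _ = (d*a*d⁻¹)*b⁻¹ := by group
    _ = (a⁻¹*d*a)*b⁻¹ := by rw [h1]
    _ = (a⁻¹*d) * (a*b⁻¹) := by group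

lemma A8 {a b d : G} (hab : a*b*a = b*a*b) (hda : d*a*d = a*d*a) (hdb : d*b = b*d) :
    d⁻¹ * (a*b⁻¹) * d = (a*b⁻¹) * ((d*a⁻¹) * (b⁻¹*a)) := by
  have h1 : d⁻¹*a*d = a*d*a⁻¹ := P2 hda
  have h2 : b⁻¹*d = d*b⁻¹ := by
    calc b⁻¹*d = b⁻¹*(d*b)*b⁻¹ := by group
      _ = b⁻¹*(b*d)*b⁻¹ := by rw [hdb]
      _ = d*b⁻¹ := by group
  have h3 : b*a⁻¹*b⁻¹ = a⁻¹*b⁻¹*a := P3 hab.symm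
  calc d⁻¹ * (a*b⁻¹) * d = d⁻¹*a*(b⁻¹*d) := by group
    _ = d⁻¹*a*(d*b⁻¹) := by rw [h2]
    _ = (d⁻¹*a*d)*b⁻¹ := by group
    _ = (a*d*a⁻¹)*b⁻¹ := by rw [h1]
    _ = a*(d*b⁻¹)*(b*a⁻¹*b⁻¹) := by group
    _ = a*(d*b⁻¹)*(a⁻¹*b⁻¹*a) := by rw [h3]
    _ = a*(b⁻¹*d)*(a⁻¹*b⁻¹*a) := by rw [← h2]
    _ = (a*b⁻¹) * ((d*a⁻¹) * (b⁻¹*a)) := by group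

lemma conj_far {a b g x : G} (hga : g*a = a*g) (hgb : g*b = b*g) (hx : x = a*b⁻¹) :
    g * x * g⁻¹ = x ∧ g⁻¹ * x * g = x := by
  subst hx
  have hgb' : g*b⁻¹ = b⁻¹*g := by
    calc g*b⁻¹ = b⁻¹*(b*g)*b⁻¹ := by group
      _ = b⁻¹*(g*b)*b⁻¹ := by rw [hgb]
      _ = b⁻¹*g := by group
  constructor
  · calc g*(a*b⁻¹)*g⁻¹ = (g*a)*b⁻¹*g⁻¹ := by group
      _ = (a*g)*b⁻¹*g⁻¹ := by rw [hga]
      _ = a*(g*b⁻¹)*g⁻¹ := by group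
      _ = a*(b⁻¹*g)*g⁻¹ := by rw [hgb']
      _ = a*b⁻¹ := by group
  · have hga' : a*g = g*a := hga.symm
    calc g⁻¹*(a*b⁻¹)*g = g⁻¹*(a*g)*(g⁻¹*b⁻¹*g) := by group
      _ = g⁻¹*(g*a)*(g⁻¹*b⁻¹*g) := by rw [hga]
      _ = a*(g⁻¹*(b⁻¹*g)) := by group
      _ = a*(g⁻¹*(g*b⁻¹)) := by rw [hgb']
      _ = a*b⁻¹ := by group

lemma inv_swap {a b : G} (h : a*b = b*a) : a⁻¹*b = b*a⁻¹ := by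
  calc a⁻¹*b = a⁻¹*(b*a)*a⁻¹ := by group
    _ = a⁻¹*(a*b)*a⁻¹ := by rw [h]
    _ = b*a⁻¹ := by group

end BraidAux

section Main

open BraidAux Subgroup
open scoped commutatorElement

variable {n : ℕ}

private lemma rel_one {r : FreeGroup (Fin (n-1))} (hr : r ∈ braidRels n) :
    (PresentedGroup.mk (braidRels n) r : BraidGroup n) = 1 := by
  show (QuotientGroup.mk r : FreeGroup (Fin (n-1)) ⧸ Subgroup.normalClosure (braidRels n)) = 1
  rw [QuotientGroup.eq_one_iff]
  exact Subgroup.subset_normalClosure hr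

private lemma braid_rel1 {i j : Fin (n-1)} (h : (i:ℕ) + 1 = j) :
    braidGen n i * braidGen n j * braidGen n i = braidGen n j * braidGen n i * braidGen n j := by
  have h1 : (PresentedGroup.mk (braidRels n)
      (FreeGroup.of i * FreeGroup.of j * FreeGroup.of i *
        (FreeGroup.of j * FreeGroup.of i * FreeGroup.of j)⁻¹) : BraidGroup n) = 1 :=
    rel_one (Or.inl ⟨i, j, h, rfl⟩)
  simp only [map_mul, map_inv] at h1
  exact mul_inv_eq_one.1 h1

private lemma braid_rel2 {i j : Fin (n-1)} (h : (i:ℕ) + 2 ≤ j) :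
    braidGen n i * braidGen n j = braidGen n j * braidGen n i := by
  have h1 : (PresentedGroup.mk (braidRels n)
      (FreeGroup.of i * FreeGroup.of j * (FreeGroup.of j * FreeGroup.of i)⁻¹) : BraidGroup n) = 1 :=
    rel_one (Or.inr ⟨i, j, h, rfl⟩)
  simp only [map_mul, map_inv] at h1
  exact mul_inv_eq_one.1 h1

private lemma braid_comm {i j : Fin (n-1)} (h : (i:ℕ) + 2 ≤ j ∨ (j:ℕ) + 2 ≤ i) :
    braidGen n i * braidGen n j = braidGen n j * braidGen n i := by
  rcases h with h | h
  · exact braid_rel2 h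
  · exact (braid_rel2 h).symm

/-- the generating set -/
def braidS (n : ℕ) : Set (BraidGroup n) :=
  {x : BraidGroup n | ∃ i j : Fin (n - 1), (i : ℕ) + 1 = (j : ℕ) ∧
      x = braidGen n i * (braidGen n j)⁻¹}

private lemma gen_mem {i j : Fin (n-1)} (h : (i:ℕ) + 1 = j) :
    braidGen n i * (braidGen n j)⁻¹ ∈ closure (braidS n) :=
  subset_closure ⟨i, j, h, rfl⟩

private lemma u_mem_aux : ∀ (d : ℕ) (i j : Fin (n-1)), (i:ℕ) + d = (j:ℕ) →
    braidGen n i * (braidGen n j)⁻¹ ∈ closure (braidS n) := by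
  intro d
  induction d with
  | zero =>
    intro i j h
    have : i = j := Fin.ext (by omega)
    subst this
    simp only [mul_inv_cancel]
    exact one_mem _
  | succ d ih =>
    intro i j h
    have hk : (i:ℕ) + d < n - 1 := by have := j.isLt; omega
    set k : Fin (n-1) := ⟨(i:ℕ) + d, hk⟩ with hkdef
    have h1 := ih i k (by simp [hkdef])
    have h2 : braidGen n k * (braidGen n j)⁻¹ ∈ closure (braidS n) :=
      gen_mem (by simp [hkdef]; omega)
    have e : braidGen n i * (braidGen n j)⁻¹ =
        (braidGen n i * (braidGen n k)⁻¹) * (braidGen n k * (braidGen n j)⁻¹) := by group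
    rw [e]
    exact mul_mem h1 h2

private lemma u_mem (i j : Fin (n-1)) :
    braidGen n i * (braidGen n j)⁻¹ ∈ closure (braidS n) := by
  rcases le_total (i:ℕ) (j:ℕ) with h | h
  · exact u_mem_aux ((j:ℕ) - i) i j (by omega)
  · have h1 := u_mem_aux ((i:ℕ) - j) j i (by omega)
    have e : braidGen n i * (braidGen n j)⁻¹ =
        (braidGen n j * (braidGen n i)⁻¹)⁻¹ := by group
    rw [e]
    exact inv_mem h1

private lemma far_mem {i j : Fin (n-1)} (h : (i:ℕ)+2 ≤ (j:ℕ) ∨ (j:ℕ)+2 ≤ (i:ℕ)) :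
    (braidGen n i)⁻¹ * braidGen n j ∈ closure (braidS n) := by
  rw [inv_swap (braid_comm h)]
  exact u_mem j i

private lemma pick_far (hn : 5 ≤ n) (i : Fin (n-1)) :
    ∃ r : Fin (n-1), ((i:ℕ)+2 ≤ (r:ℕ) ∨ (r:ℕ)+2 ≤ (i:ℕ)) ∧ ((r:ℕ) = 0 ∨ (r:ℕ) = n-2) := by
  have hi := i.isLt
  by_cases h2 : 2 ≤ (i:ℕ)
  · exact ⟨⟨0, by omega⟩, Or.inr (by simpa using h2), Or.inl rfl⟩
  · refine ⟨⟨n-2, by omega⟩, Or.inl (by simp; omega), Or.inr (by simp)⟩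

private lemma v_mem (hn : 5 ≤ n) (i j : Fin (n-1)) :
    (braidGen n i)⁻¹ * braidGen n j ∈ closure (braidS n) := by
  obtain ⟨ri, hri, hri2⟩ := pick_far hn i
  obtain ⟨rj, hrj, hrj2⟩ := pick_far hn j
  have e : (braidGen n i)⁻¹ * braidGen n j =
      ((braidGen n i)⁻¹ * braidGen n ri) * ((braidGen n ri)⁻¹ * braidGen n rj) *
        ((braidGen n rj)⁻¹ * braidGen n j) := by group
  rw [e]
  refine mul_mem (mul_mem (far_mem hri) ?_) (far_mem hrj.symm)
  by_cases hee : ri = rj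
  · subst hee
    simp only [inv_mul_cancel]
    exact one_mem _
  · have : (ri:ℕ) ≠ (rj:ℕ) := fun hc => hee (Fin.ext hc)
    exact far_mem (by omega)

private lemma conj_mem (hn : 5 ≤ n) (k : Fin (n-1)) {x : BraidGroup n} (hx : x ∈ braidS n) :
    braidGen n k * x * (braidGen n k)⁻¹ ∈ closure (braidS n) ∧
    (braidGen n k)⁻¹ * x * braidGen n k ∈ closure (braidS n) := by
  obtain ⟨i, j, hij, rfl⟩ := hx
  have hab := braid_rel1 hij
  by_cases hki : (k:ℕ) = (i:ℕ)
  · have : k = i := Fin.ext hki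
    subst this
    constructor
    · rw [A1 hab]
      exact mul_mem (u_mem k j) (v_mem hn k j)
    · rw [A3]
      exact v_mem hn j k
  by_cases hkj : (k:ℕ) = (j:ℕ)
  · have : k = j := Fin.ext hkj
    subst this
    constructor
    · rw [A2 hab]
      exact mul_mem (v_mem hn i k) (u_mem i k)
    · rw [A4]
      exact v_mem hn k i
  by_cases hkc : (j:ℕ) + 1 = (k:ℕ)
  · have hbc := braid_rel1 hkc
    have hac := braid_rel2 (i := i) (j := k) (by omega)
    constructor
    · rw [A5 hbc hac]
      exact mul_mem (u_mem i j) (v_mem hn k j)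
    · rw [A6 hac]
      exact mul_mem (u_mem i k) (v_mem hn j k)
  by_cases hkd : (k:ℕ) + 1 = (i:ℕ)
  · have hda := braid_rel1 hkd
    have hdb := braid_rel2 (i := k) (j := j) (by omega)
    constructor
    · rw [A7 hda hdb]
      exact mul_mem (v_mem hn i k) (u_mem i j)
    · rw [A8 hab hda hdb]
      exact mul_mem (u_mem i j) (mul_mem (u_mem k i) (v_mem hn j i))
  · have hga : braidGen n k * braidGen n i = braidGen n i * braidGen n k :=
      braid_comm (by omega)
    have hgb : braidGen n k * braidGen n j = braidGen n j * braidGen n k :=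
      braid_comm (by omega)
    obtain ⟨e1, e2⟩ := conj_far hga hgb rfl
    rw [e1, e2]
    exact ⟨gen_mem hij, gen_mem hij⟩

private lemma gen_top (g : BraidGroup n) : g ∈ closure (Set.range (braidGen n)) := by
  have : closure (Set.range (braidGen n)) =
      (⊤ : Subgroup (PresentedGroup (braidRels n))) :=
    PresentedGroup.closure_range_of (braidRels n)
  rw [this]
  exact mem_top g

private lemma closure_normal (hn : 5 ≤ n) : (closure (braidS n)).Normal := by
  have key : ∀ g : BraidGroup n, ∀ x ∈ closure (braidS n),
      g * x * g⁻¹ ∈ closure (braidS n) ∧ g⁻¹ * x * g ∈ closure (braidS n) := by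
    intro g
    refine Subgroup.closure_induction (k := Set.range (braidGen n))
      (p := fun g _ => ∀ x ∈ closure (braidS n),
        g * x * g⁻¹ ∈ closure (braidS n) ∧ g⁻¹ * x * g ∈ closure (braidS n))
      ?_ ?_ ?_ ?_ (gen_top g)
    · rintro g' ⟨k, rfl⟩ x hx
      refine Subgroup.closure_induction
        (p := fun x _ => braidGen n k * x * (braidGen n k)⁻¹ ∈ closure (braidS n) ∧
          (braidGen n k)⁻¹ * x * braidGen n k ∈ closure (braidS n)) ?_ ?_ ?_ ?_ hx
      · intro y hy
        exact conj_mem hn k hy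
      · constructor <;> · simp only [mul_one]
                          simpa using one_mem (closure (braidS n))
      · intro y z _ _ ⟨hy1, hy2⟩ ⟨hz1, hz2⟩
        constructor
        · have e : braidGen n k * (y*z) * (braidGen n k)⁻¹ =
            (braidGen n k * y * (braidGen n k)⁻¹) * (braidGen n k * z * (braidGen n k)⁻¹) := by
            group
          rw [e]; exact mul_mem hy1 hz1
        · have e : (braidGen n k)⁻¹ * (y*z) * braidGen n k =
            ((braidGen n k)⁻¹ * y * braidGen n k) * ((braidGen n k)⁻¹ * z * braidGen n k) := by
            group
          rw [e]; exact mul_mem hy2 hz2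
      · intro y _ ⟨hy1, hy2⟩
        constructor
        · have e : braidGen n k * y⁻¹ * (braidGen n k)⁻¹ =
            (braidGen n k * y * (braidGen n k)⁻¹)⁻¹ := by group
          rw [e]; exact inv_mem hy1
        · have e : (braidGen n k)⁻¹ * y⁻¹ * braidGen n k =
            ((braidGen n k)⁻¹ * y * braidGen n k)⁻¹ := by group
          rw [e]; exact inv_mem hy2
    · intro x hx
      simp only [one_mul, inv_one, mul_one]
      exact ⟨hx, hx⟩
    · intro g1 g2 _ _ H1 H2 x hx
      constructor
      · have e : (g1*g2) * x * (g1*g2)⁻¹ = g1 * (g2 * x * g2⁻¹) * g1⁻¹ := by group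
        rw [e]; exact (H1 _ (H2 x hx).1).1
      · have e : (g1*g2)⁻¹ * x * (g1*g2) = g2⁻¹ * (g1⁻¹ * x * g1) * g2 := by group
        rw [e]; exact (H2 _ (H1 x hx).2).2
    · intro g' _ Hg x hx
      constructor
      · have e : g'⁻¹ * x * g'⁻¹⁻¹ = g'⁻¹ * x * g' := by group
        rw [e]; exact (Hg x hx).2
      · have e : g'⁻¹⁻¹ * x * g'⁻¹ = g' * x * g'⁻¹ := by group
        rw [e]; exact (Hg x hx).1
  exact ⟨fun x hx g => (key g x hx).1⟩

theorem braid_commutator_eq_closure (n : ℕ) (hn : 5 ≤ n) :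
    Subgroup.closure {x : BraidGroup n | ∃ i j : Fin (n - 1), (i : ℕ) + 1 = (j : ℕ) ∧
        x = braidGen n i * (braidGen n j)⁻¹} = commutator (BraidGroup n) := by
  show Subgroup.closure (braidS n) = commutator (BraidGroup n)
  apply le_antisymm
  · rw [Subgroup.closure_le]
    rintro x ⟨i, j, hij, rfl⟩
    have hab := braid_rel1 hij
    have hc : ⁅braidGen n i, braidGen n j⁆ = (braidGen n j)⁻¹ * braidGen n i := by
      rw [commutatorElement_def]
      calc braidGen n i * braidGen n j * (braidGen n i)⁻¹ * (braidGen n j)⁻¹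
          = (braidGen n i * braidGen n j * (braidGen n i)⁻¹) * (braidGen n j)⁻¹ := by group
        _ = ((braidGen n j)⁻¹ * braidGen n i * braidGen n j) * (braidGen n j)⁻¹ := by
            rw [P1 hab]
        _ = (braidGen n j)⁻¹ * braidGen n i := by group
    have h1 : ⁅braidGen n i, braidGen n j⁆ ∈ commutator (BraidGroup n) := by
      rw [_root_.commutator_def]
      exact Subgroup.commutator_mem_commutator (Subgroup.mem_top _) (Subgroup.mem_top _)
    have hnorm : (commutator (BraidGroup n)).Normal := inferInstance
    have e : braidGen n i * (braidGen n j)⁻¹ =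
        braidGen n j * ⁅braidGen n i, braidGen n j⁆ * (braidGen n j)⁻¹ := by
      rw [hc]; group
    rw [e]
    exact hnorm.conj_mem _ h1 _
  · haveI hH : (Subgroup.closure (braidS n)).Normal := closure_normal hn
    set H := Subgroup.closure (braidS n) with hHdef
    have h0 : (0:ℕ) < n - 1 := by omega
    set c : BraidGroup n ⧸ H := ((braidGen n ⟨0, h0⟩ : BraidGroup n) : BraidGroup n ⧸ H)
      with hcdef
    have all_eq : ∀ (p : ℕ) (hp : p < n - 1),
        ((braidGen n ⟨p, hp⟩ : BraidGroup n) : BraidGroup n ⧸ H) = c := by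
      intro p
      induction p with
      | zero => intro hp; rfl
      | succ p ih =>
        intro hp
        have hp' : p < n - 1 := by omega
        have hmem : braidGen n ⟨p, hp'⟩ * (braidGen n ⟨p+1, hp⟩)⁻¹ ∈ H :=
          gen_mem (by simp)
        have h1 : ((braidGen n ⟨p, hp'⟩ * (braidGen n ⟨p+1, hp⟩)⁻¹ : BraidGroup n) :
            BraidGroup n ⧸ H) = 1 := (QuotientGroup.eq_one_iff _).2 hmem
        rw [QuotientGroup.mk_mul, QuotientGroup.mk_inv] at h1
        have h2 := mul_inv_eq_one.1 h1
        rw [← h2]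
        exact ih hp'
    have htop : ∀ q : BraidGroup n ⧸ H, q ∈ Subgroup.zpowers c := by
      intro q
      obtain ⟨g, rfl⟩ := QuotientGroup.mk_surjective q
      show (QuotientGroup.mk g : BraidGroup n ⧸ H) ∈ Subgroup.zpowers c
      refine Subgroup.closure_induction
        (p := fun (g : BraidGroup n) (_ : g ∈ Subgroup.closure (Set.range (braidGen n))) =>
          (QuotientGroup.mk g : BraidGroup n ⧸ H) ∈ Subgroup.zpowers c) ?_ ?_ ?_ ?_ (gen_top g)
      · rintro g' ⟨k, rfl⟩
        show (QuotientGroup.mk (braidGen n k) : BraidGroup n ⧸ H) ∈ Subgroup.zpowers c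
        have e : braidGen n k = braidGen n ⟨(k:ℕ), k.isLt⟩ := by simp
        rw [e, all_eq (k:ℕ) k.isLt]
        exact Subgroup.mem_zpowers c
      · show (QuotientGroup.mk (1 : BraidGroup n) : BraidGroup n ⧸ H) ∈ Subgroup.zpowers c
        rw [QuotientGroup.mk_one]
        exact one_mem _
      · intro x y _ _ hx hy
        show (QuotientGroup.mk (x * y) : BraidGroup n ⧸ H) ∈ Subgroup.zpowers c
        rw [QuotientGroup.mk_mul]
        exact mul_mem hx hy
      · intro x _ hx
        show (QuotientGroup.mk (x⁻¹) : BraidGroup n ⧸ H) ∈ Subgroup.zpowers c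
        rw [QuotientGroup.mk_inv]
        exact inv_mem hx
    rw [_root_.commutator_def]
    refine Subgroup.commutator_le.2 ?_
    intro g1 _ g2 _
    refine (QuotientGroup.eq_one_iff _).1 ?_
    have e : ((⁅g1, g2⁆ : BraidGroup n) : BraidGroup n ⧸ H) = ⁅((g1 : BraidGroup n) :
        BraidGroup n ⧸ H), ((g2 : BraidGroup n) : BraidGroup n ⧸ H)⁆ :=
      map_commutatorElement (QuotientGroup.mk' H) g1 g2
    rw [e, commutatorElement_eq_one_iff_mul_comm]
    obtain ⟨z1, hz1⟩ := Subgroup.mem_zpowers_iff.1 (htop ((g1 : BraidGroup n) : BraidGroup n ⧸ H))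
    obtain ⟨z2, hz2⟩ := Subgroup.mem_zpowers_iff.1 (htop ((g2 : BraidGroup n) : BraidGroup n ⧸ H))
    rw [← hz1, ← hz2, ← zpow_add, ← zpow_add, add_comm]

end Main
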